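/- arXiv:0804.3693 — 5 statements merged into one kernel-verified Lean document; each statement's English description precedes it below -/
import Mathlib

section
/- Suppose a: I → (0,∞) is C², ρ, p: I → ℝ are C¹, satisfying the evolution equation a''/a = -(4π/3)(ρ+3p) + (8π/3)[f(ρ) - (3/2)(ρ+p) f'(ρ)] and the conservation law ρ' + 3(a'/a)(ρ+p) = 0, where f is C¹. If the modified Friedmann equation (a'/a)² = (8π/3)(ρ + f(ρ)) - k/a² holds at some time t₀ ∈ I, then it holds for all t ∈ I. -/
open Real Set

/-- propagation of the modified Friedmann constraint
(a'/a)² = (8π/3)(ρ + f(ρ)) - k/a² for isotropic Cardassian models: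
if it holds at one time and the evolution and conservation equations hold
on the interval, then it holds at all times. -/
theorem stmt3 (I : Set ℝ) (hI : I.OrdConnected) (k : ℝ)
    (f : ℝ → ℝ) (hf : ContDiff ℝ 1 f)
    (a ρ p a' a'' ρ' : ℝ → ℝ) (t₀ : ℝ) (ht₀ : t₀ ∈ I)
    (ha : ∀ t ∈ I, HasDerivAt a (a' t) t)
    (ha' : ∀ t ∈ I, HasDerivAt a' (a'' t) t)
    (hρ : ∀ t ∈ I, HasDerivAt ρ (ρ' t) t)
    (hapos : ∀ t ∈ I, 0 < a t)
    (hevol : ∀ t ∈ I, a'' t / a t =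
      -(4 * π / 3) * (ρ t + 3 * p t) +
        (8 * π / 3) * (f (ρ t) - (3 / 2) * (ρ t + p t) * deriv f (ρ t)))
    (hcons : ∀ t ∈ I, ρ' t + 3 * (a' t / a t) * (ρ t + p t) = 0)
    (hconstr0 : (a' t₀ / a t₀) ^ 2 = (8 * π / 3) * (ρ t₀ + f (ρ t₀)) - k / a t₀ ^ 2) :
    ∀ t ∈ I, (a' t / a t) ^ 2 = (8 * π / 3) * (ρ t + f (ρ t)) - k / a t ^ 2 := by
  set E : ℝ → ℝ := fun s => (a' s) ^ 2 - (8 * π / 3) * (ρ s + f (ρ s)) * (a s) ^ 2 + k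
    with hE
  have hconv : Convex ℝ I := convex_iff_ordConnected.mpr hI
  have key : ∀ s ∈ I, HasDerivWithinAt E 0 I s := by
    intro s hs
    have hane : a s ≠ 0 := (hapos s hs).ne'
    have hfd : HasDerivAt f (deriv f (ρ s)) (ρ s) :=
      ((hf.differentiable one_ne_zero) (ρ s)).hasDerivAt
    have h1 : HasDerivAt (fun u => (a' u) ^ 2) (2 * (a' s) ^ 1 * a'' s) s :=
      (ha' s hs).pow 2
    have h2 : HasDerivAt (fun u => ρ u + f (ρ u)) (ρ' s + deriv f (ρ s) * ρ' s) s :=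
      (hρ s hs).add (hfd.comp s (hρ s hs))
    have h3 : HasDerivAt (fun u => (a u) ^ 2) (2 * (a s) ^ 1 * a' s) s :=
      (ha s hs).pow 2
    have hEd : HasDerivAt E
        (2 * (a' s) ^ 1 * a'' s -
          ((8 * π / 3) * (ρ' s + deriv f (ρ s) * ρ' s) * (a s) ^ 2 +
            (8 * π / 3) * (ρ s + f (ρ s)) * (2 * (a s) ^ 1 * a' s))) s :=
      (h1.sub ((h2.const_mul (8 * π / 3)).mul h3)).add_const k
    have hzero : 2 * (a' s) ^ 1 * a'' s -
          ((8 * π / 3) * (ρ' s + deriv f (ρ s) * ρ' s) * (a s) ^ 2 +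
            (8 * π / 3) * (ρ s + f (ρ s)) * (2 * (a s) ^ 1 * a' s)) = 0 := by
      have he := hevol s hs
      have hc := hcons s hs
      have he' : a'' s = (-(4 * π / 3) * (ρ s + 3 * p s) +
          (8 * π / 3) * (f (ρ s) - (3 / 2) * (ρ s + p s) * deriv f (ρ s))) * a s := by
        field_simp at he
        linarith [he]
      have hc' : ρ' s * a s = -3 * a' s * (ρ s + p s) := by
        field_simp at hc
        linarith [hc]
      have hc2 : ρ' s * (a s) ^ 2 = (-3 * a' s * (ρ s + p s)) * a s := by
        rw [sq, ← mul_assoc, hc']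
      linear_combination 2 * a' s * he' - (8 * π / 3) * (1 + deriv f (ρ s)) * hc2
    rw [hzero] at hEd
    exact hEd.hasDerivWithinAt
  have hconst : ∀ s ∈ I, E s = E t₀ := by
    intro s hs
    have := hconv.norm_image_sub_le_of_norm_hasDerivWithin_le key
      (fun x _ => le_of_eq norm_zero) ht₀ hs
    have h0 : E s - E t₀ = 0 := norm_le_zero_iff.mp (by simpa using this)
    linarith [h0]
  have hE0 : E t₀ = 0 := by
    have hane : a t₀ ≠ 0 := (hapos t₀ ht₀).ne'
    rw [div_pow, div_eq_iff (pow_ne_zero 2 hane), sub_mul,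
      div_mul_cancel₀ _ (pow_ne_zero 2 hane)] at hconstr0
    simp only [hE]
    linarith [hconstr0]
  intro t ht
  have hane : a t ≠ 0 := (hapos t ht).ne'
  have hEt : E t = 0 := (hconst t ht).trans hE0
  simp only [hE] at hEt
  rw [div_pow, div_eq_iff (pow_ne_zero 2 hane), sub_mul,
    div_mul_cancel₀ _ (pow_ne_zero 2 hane)]
  linarith [hEt]
end

section
/- Let A > 0, B ∈ ℝ, γ ∈ [1,2], n ∈ ℝ, and define V(a) = -(4π/3)(A a^{2-3γ} + B Aⁿ a^{2-3nγ}) on (0,∞). Then V' has a zero in (0,∞) if and only if either (B > 0 and n < 2/(3γ)) or (B < 0 and n > 2/(3γ)), and in that case the zero is unique, given by a* = [B A^{n-1}(2-3nγ)/(3γ-2)]^{1/(3(n-1)γ)}. -/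
open Real Set

/-- the Cardassian effective potential
V(a) = -(4π/3)(A a^{2-3γ} + B Aⁿ a^{2-3nγ}) has a zero of V' in (0,∞)
iff (B>0 and n<2/(3γ)) or (B<0 and n>2/(3γ)), and then the zero is unique,
given by a* = [B A^{n-1}(2-3nγ)/(3γ-2)]^{1/(3(n-1)γ)}. -/
theorem stmt4 (A B γ n : ℝ) (hA : 0 < A) (hγ : γ ∈ Set.Icc (1:ℝ) 2)
    (hn0 : n ≠ 0) (hn1 : n ≠ 1) (hn2 : n ≠ 2 / (3 * γ))
    (V : ℝ → ℝ)
    (hV : ∀ a > (0:ℝ), V a =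
      -(4 * π / 3) * (A * a ^ (2 - 3 * γ) + B * A ^ n * a ^ (2 - 3 * n * γ))) :
    ((∃ a > (0:ℝ), deriv V a = 0) ↔
      (0 < B ∧ n < 2 / (3 * γ)) ∨ (B < 0 ∧ 2 / (3 * γ) < n)) ∧
    (∀ a > (0:ℝ), deriv V a = 0 →
      a = (B * A ^ (n - 1) * (2 - 3 * n * γ) / (3 * γ - 2)) ^ (1 / (3 * (n - 1) * γ))) := by
  obtain ⟨hγ1, hγ2⟩ := hγ
  have hγ0 : (0:ℝ) < γ := by linarith
  have h3γ : (0:ℝ) < 3 * γ := by linarith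
  have hden : (0:ℝ) < 3 * γ - 2 := by linarith
  have hne : 2 - 3 * n * γ ≠ 0 := by
    intro h
    apply hn2
    rw [eq_div_iff h3γ.ne']
    nlinarith [h]
  set C := B * A ^ (n - 1) * (2 - 3 * n * γ) / (3 * γ - 2) with hC
  set e := 3 * (n - 1) * γ with he
  have he0 : e ≠ 0 :=
    mul_ne_zero (mul_ne_zero three_ne_zero (sub_ne_zero.mpr hn1)) hγ0.ne'
  have hπ : (-(4 * π / 3) : ℝ) ≠ 0 := by
    have : (0:ℝ) < 4 * π / 3 := by positivity
    exact neg_ne_zero.mpr this.ne'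
  have hderiv : ∀ a > (0:ℝ), deriv V a =
      -(4 * π / 3) * (A * ((2 - 3*γ) * a ^ (2 - 3*γ - 1))
        + B * A ^ n * ((2 - 3*n*γ) * a ^ (2 - 3*n*γ - 1))) := by
    intro a ha
    have hev : V =ᶠ[nhds a]
        fun x => -(4 * π / 3) * (A * x ^ (2 - 3*γ) + B * A ^ n * x ^ (2 - 3*n*γ)) := by
      filter_upwards [IsOpen.mem_nhds isOpen_Ioi ha] with x hx
      exact hV x hx
    rw [hev.deriv_eq]
    have h1 : HasDerivAt (fun x : ℝ => x ^ (2 - 3*γ)) ((2 - 3*γ) * a ^ (2 - 3*γ - 1)) a :=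
      Real.hasDerivAt_rpow_const (Or.inl ha.ne')
    have h2 : HasDerivAt (fun x : ℝ => x ^ (2 - 3*n*γ)) ((2 - 3*n*γ) * a ^ (2 - 3*n*γ - 1)) a :=
      Real.hasDerivAt_rpow_const (Or.inl ha.ne')
    exact (((h1.const_mul A).add (h2.const_mul (B * A ^ n))).const_mul (-(4 * π / 3))).deriv
  have key : ∀ a > (0:ℝ), (deriv V a = 0 ↔ a ^ e = C) := by
    intro a ha
    rw [hderiv a ha]
    have hq0 : (0:ℝ) < a ^ (2 - 3*n*γ - 1) := Real.rpow_pos_of_pos ha _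
    have hq : a ^ (2 - 3*γ - 1) = a ^ e * a ^ (2 - 3*n*γ - 1) := by
      rw [← Real.rpow_add ha, he]; ring_nf
    have hAn : A ^ n = A ^ (n-1) * A := by
      rw [← Real.rpow_add_one hA.ne' (n-1), sub_add_cancel]
    have hAp : (0:ℝ) < A ^ (n - 1) := Real.rpow_pos_of_pos hA _
    rw [hq, hAn, mul_eq_zero]
    have hfac : A * ((2 - 3*γ) * (a ^ e * a ^ (2 - 3*n*γ - 1)))
        + B * (A ^ (n-1) * A) * ((2 - 3*n*γ) * a ^ (2 - 3*n*γ - 1))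
        = (A * a ^ (2 - 3*n*γ - 1)) * ((2 - 3*γ) * a ^ e + B * A ^ (n-1) * (2 - 3*n*γ)) := by
      ring
    rw [hfac, hC]
    constructor
    · rintro (h | h)
      · exact absurd h hπ
      · rcases mul_eq_zero.mp h with h' | h'
        · exact absurd h' (by positivity)
        · rw [eq_div_iff hden.ne']; nlinarith [h']
    · intro h
      right
      rw [eq_div_iff hden.ne'] at h
      have : (2 - 3*γ) * a ^ e + B * A ^ (n-1) * (2 - 3*n*γ) = 0 := by nlinarith [h]
      rw [this, mul_zero]
  constructor
  · constructor
    · rintro ⟨a, ha, h0⟩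
      have hCpos : 0 < C := by
        rw [← (key a ha).mp h0]
        exact Real.rpow_pos_of_pos ha e
      have hAp : (0:ℝ) < A ^ (n - 1) := Real.rpow_pos_of_pos hA _
      have hBs : 0 < B * (2 - 3*n*γ) := by
        rw [hC] at hCpos
        rcases div_pos_iff.mp hCpos with ⟨hnum, _⟩ | ⟨_, hd⟩
        · nlinarith [hnum, hAp]
        · linarith
      rcases lt_trichotomy B 0 with hB | hB | hB
      · right
        refine ⟨hB, ?_⟩
        have h2 : 2 - 3*n*γ < 0 := by nlinarith
        rw [div_lt_iff₀ h3γ]; nlinarith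
      · exfalso; rw [hB, zero_mul] at hBs; exact lt_irrefl 0 hBs
      · left
        refine ⟨hB, ?_⟩
        have h2 : 0 < 2 - 3*n*γ := by nlinarith
        rw [lt_div_iff₀ h3γ]; nlinarith
    · rintro (⟨hB, hn⟩ | ⟨hB, hn⟩)
      · have h2 : 0 < 2 - 3*n*γ := by
          rw [lt_div_iff₀ h3γ] at hn; nlinarith
        have hCpos : 0 < C := by
          rw [hC]
          have hAp : (0:ℝ) < A ^ (n - 1) := Real.rpow_pos_of_pos hA _
          positivity
        refine ⟨C ^ (1/e), Real.rpow_pos_of_pos hCpos _, ?_⟩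
        rw [key _ (Real.rpow_pos_of_pos hCpos _)]
        rw [one_div]
        exact Real.rpow_inv_rpow hCpos.le he0
      · have h2 : 2 - 3*n*γ < 0 := by
          rw [div_lt_iff₀ h3γ] at hn; nlinarith
        have hCpos : 0 < C := by
          rw [hC]
          have hAp : (0:ℝ) < A ^ (n - 1) := Real.rpow_pos_of_pos hA _
          have : 0 < B * A ^ (n-1) * (2 - 3*n*γ) := by
            nlinarith [mul_pos (mul_pos_of_neg_of_neg hB h2) hAp]
          positivity
        refine ⟨C ^ (1/e), Real.rpow_pos_of_pos hCpos _, ?_⟩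
        rw [key _ (Real.rpow_pos_of_pos hCpos _)]
        rw [one_div]
        exact Real.rpow_inv_rpow hCpos.le he0
  · intro a ha h0
    have h1 : a ^ e = C := (key a ha).mp h0
    rw [← h1, one_div]
    exact (Real.rpow_rpow_inv ha.le he0).symm
end

section
/- Let A > 0, γ ∈ [1,2], n ∉ {0, 1, 2/(3γ)}, and suppose B and n are such that V(a) = -(4π/3)(A a^{2-3γ} + B Aⁿ a^{2-3nγ}) has a critical point a* ∈ (0,∞) (i.e. B>0, n<2/(3γ) or B<0, n>2/(3γ)). Then V''(a*) > 0 if n > 1 (local minimum) and V''(a*) < 0 if n < 1 (local maximum). -/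
open Real Set

private lemma hasDerivAt_aux (C c₁ c₂ p q : ℝ) {x : ℝ} (hx : x ≠ 0) :
    HasDerivAt (fun a : ℝ => C * (c₁ * a ^ p + c₂ * a ^ q))
      (C * (c₁ * (p * x ^ (p - 1)) + c₂ * (q * x ^ (q - 1)))) x :=
  (((Real.hasDerivAt_rpow_const (Or.inl hx)).const_mul c₁).add
    ((Real.hasDerivAt_rpow_const (Or.inl hx)).const_mul c₂)).const_mul C

/-- at the unique critical point a* of the Cardassian effective
potential V, one has V''(a*) > 0 if n > 1 (local minimum) and V''(a*) < 0 if
n < 1 (local maximum). -/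
theorem stmt5 (A B γ n : ℝ) (hA : 0 < A) (hγ : γ ∈ Set.Icc (1:ℝ) 2)
    (hn0 : n ≠ 0) (hn1 : n ≠ 1) (hn2 : n ≠ 2 / (3 * γ))
    (hcrit : (0 < B ∧ n < 2 / (3 * γ)) ∨ (B < 0 ∧ 2 / (3 * γ) < n))
    (V : ℝ → ℝ)
    (hV : ∀ a > (0:ℝ), V a =
      -(4 * π / 3) * (A * a ^ (2 - 3 * γ) + B * A ^ n * a ^ (2 - 3 * n * γ)))
    (astar : ℝ)
    (hastar : astar =
      (B * A ^ (n - 1) * (2 - 3 * n * γ) / (3 * γ - 2)) ^ (1 / (3 * (n - 1) * γ))) :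
    (1 < n → 0 < deriv (deriv V) astar) ∧ (n < 1 → deriv (deriv V) astar < 0) := by
  obtain ⟨hγ1, hγ2⟩ := hγ
  have hγpos : 0 < γ := by linarith
  have h3γ2 : 0 < 3 * γ - 2 := by linarith
  -- B * (2 - 3nγ) > 0
  have hBq : 0 < B * (2 - 3 * n * γ) := by
    rcases hcrit with ⟨hB, hn⟩ | ⟨hB, hn⟩
    · have h : n * (3 * γ) < 2 := (lt_div_iff₀ (by positivity)).mp hn
      have : 0 < 2 - 3 * n * γ := by nlinarith
      exact mul_pos hB this
    · have h : 2 < n * (3 * γ) := (div_lt_iff₀ (by positivity)).mp hn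
      have : 2 - 3 * n * γ < 0 := by nlinarith
      exact mul_pos_of_neg_of_neg hB this
  have hBne : B ≠ 0 := by
    intro h; rw [h] at hBq; simp at hBq
  have hqne : (2 - 3 * n * γ) ≠ 0 := by
    intro h; rw [h] at hBq; simp at hBq
  have hAn1 : (0:ℝ) < A ^ (n - 1) := Real.rpow_pos_of_pos hA _
  set K : ℝ := B * A ^ (n - 1) * (2 - 3 * n * γ) / (3 * γ - 2) with hKdef
  have hK : 0 < K := by
    apply div_pos _ h3γ2
    have : B * A ^ (n - 1) * (2 - 3 * n * γ) = (B * (2 - 3 * n * γ)) * A ^ (n - 1) := by ring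
    rw [this]; exact mul_pos hBq hAn1
  have ha : 0 < astar := by rw [hastar]; exact Real.rpow_pos_of_pos hK _
  have hcne : (3 * (n - 1) * γ) ≠ 0 := by
    have : n - 1 ≠ 0 := sub_ne_zero.mpr hn1
    positivity
  have hapow : astar ^ (3 * (n - 1) * γ) = K := by
    rw [hastar, ← Real.rpow_mul hK.le, one_div_mul_cancel hcne, Real.rpow_one]
  -- the explicit function and its first derivative
  set f : ℝ → ℝ := fun a =>
    -(4 * π / 3) * (A * a ^ (2 - 3 * γ) + B * A ^ n * a ^ (2 - 3 * n * γ)) with hfdef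
  set g : ℝ → ℝ := fun x =>
    -(4 * π / 3) * ((A * (2 - 3 * γ)) * x ^ (2 - 3 * γ - 1)
      + (B * A ^ n * (2 - 3 * n * γ)) * x ^ (2 - 3 * n * γ - 1)) with hgdef
  have hVf : V =ᶠ[nhds astar] f :=
    Filter.eventuallyEq_of_mem (Ioi_mem_nhds ha) (fun x hx => hV x hx)
  have hfd : ∀ x : ℝ, x ≠ 0 → HasDerivAt f (g x) x := by
    intro x hx
    have h := hasDerivAt_aux (-(4 * π / 3)) A (B * A ^ n) (2 - 3 * γ) (2 - 3 * n * γ) hx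
    convert h using 1
    simp only [hgdef]; ring
  have hfg : deriv f =ᶠ[nhds astar] g :=
    Filter.eventuallyEq_of_mem (compl_singleton_mem_nhds ha.ne')
      (fun x hx => (hfd x hx).deriv)
  have hVg : deriv V =ᶠ[nhds astar] g := hVf.deriv.trans hfg
  have hgd : HasDerivAt g
      (-(4 * π / 3) * ((A * (2 - 3 * γ)) * ((2 - 3 * γ - 1) * astar ^ (2 - 3 * γ - 1 - 1))
        + (B * A ^ n * (2 - 3 * n * γ)) *
          ((2 - 3 * n * γ - 1) * astar ^ (2 - 3 * n * γ - 1 - 1)))) astar :=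
    hasDerivAt_aux (-(4 * π / 3)) (A * (2 - 3 * γ)) (B * A ^ n * (2 - 3 * n * γ))
      (2 - 3 * γ - 1) (2 - 3 * n * γ - 1) ha.ne'
  have hD2 : deriv (deriv V) astar
      = -(4 * π / 3) * ((A * (2 - 3 * γ)) * ((2 - 3 * γ - 1) * astar ^ (2 - 3 * γ - 1 - 1))
        + (B * A ^ n * (2 - 3 * n * γ)) *
          ((2 - 3 * n * γ - 1) * astar ^ (2 - 3 * n * γ - 1 - 1))) := by
    rw [hVg.deriv_eq, hgd.deriv]
  -- simplify exponents
  have e1 : (2 - 3 * γ - 1 - 1 : ℝ) = -(3 * γ) := by ring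
  have e2 : (2 - 3 * n * γ - 1 - 1 : ℝ) = -(3 * n * γ) := by ring
  rw [e1, e2] at hD2
  -- relate the two powers of astar
  set t : ℝ := astar ^ (-(3 * γ)) with htdef
  have ht : 0 < t := Real.rpow_pos_of_pos ha _
  have hsplit : astar ^ (-(3 * n * γ)) = t * K⁻¹ := by
    have h1 : (-(3 * n * γ) : ℝ) = -(3 * γ) + -(3 * (n - 1) * γ) := by ring
    rw [h1, Real.rpow_add ha, Real.rpow_neg ha.le (3 * (n - 1) * γ), hapow, htdef]
  rw [hsplit] at hD2
  -- key coefficient identity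
  have hAn : A ^ n = A ^ (n - 1) * A := by
    rw [← Real.rpow_add_one hA.ne' (n - 1)]; ring_nf
  have hkey : B * A ^ n * (2 - 3 * n * γ) * K⁻¹ = A * (3 * γ - 2) := by
    rw [hAn, hKdef]
    field_simp
    linear_combination mul_inv_cancel₀ (show (2 - n * γ * 3) ≠ 0 by intro h; apply hqne; linarith)
  have hval : deriv (deriv V) astar = (4 * π * A * γ * (3 * γ - 2) * t) * (n - 1) := by
    rw [hD2]
    have : B * A ^ n * (2 - 3 * n * γ) * ((2 - 3 * n * γ - 1) * (t * K⁻¹))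
        = (B * A ^ n * (2 - 3 * n * γ) * K⁻¹) * ((2 - 3 * n * γ - 1) * t) := by ring
    rw [this, hkey]
    ring
  have hcoef : 0 < 4 * π * A * γ * (3 * γ - 2) * t := by
    have hπ := Real.pi_pos
    positivity
  constructor
  · intro hn
    rw [hval]
    exact mul_pos hcoef (by linarith)
  · intro hn
    rw [hval]
    exact mul_neg_of_pos_of_neg hcoef (by linarith)
end

section
/- Let V(a) = -(4π/3)(A a^{2-3γ} + B Aⁿ a^{2-3nγ}) with A > 0, B < 0, n > 1, γ ∈ [1,2], and let a* be the unique critical point of V. Then V(a) → ∞ as a → 0⁺ and V(a) → 0⁻ as a → ∞, V is decreasing on (0,a*) and increasing on (a*,∞); consequently for every E > V(a*) with E < 0 the sublevel set {a > 0 : V(a) < E} is a bounded interval with compact closure in (0,∞). -/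
open Real Set Filter Topology

/-- for B < 0, n > 1 the potential V tends to +∞ as a → 0⁺ and to
0 from below as a → ∞, is decreasing on (0,a*) and increasing on (a*,∞); for
every energy level E with V(a*) < E < 0 the sublevel set {a > 0 : V(a) < E} is
a bounded interval with compact closure contained in (0,∞). -/
theorem stmt6 (A B γ n : ℝ) (hA : 0 < A) (hB : B < 0) (hn : 1 < n)
    (hγ : γ ∈ Set.Icc (1:ℝ) 2)
    (V : ℝ → ℝ)
    (hV : ∀ a > (0:ℝ), V a =
      -(4 * π / 3) * (A * a ^ (2 - 3 * γ) + B * A ^ n * a ^ (2 - 3 * n * γ)))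
    (astar : ℝ)
    (hastar : astar =
      (B * A ^ (n - 1) * (2 - 3 * n * γ) / (3 * γ - 2)) ^ (1 / (3 * (n - 1) * γ))) :
    Tendsto V (nhdsWithin 0 (Set.Ioi 0)) atTop ∧
    Tendsto V atTop (nhdsWithin 0 (Set.Iio 0)) ∧
    StrictAntiOn V (Set.Ioc 0 astar) ∧
    StrictMonoOn V (Set.Ici astar) ∧
    ∀ E : ℝ, V astar < E → E < 0 →
      Bornology.IsBounded {a : ℝ | 0 < a ∧ V a < E} ∧
      {a : ℝ | 0 < a ∧ V a < E}.OrdConnected ∧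
      IsCompact (closure {a : ℝ | 0 < a ∧ V a < E}) ∧
      closure {a : ℝ | 0 < a ∧ V a < E} ⊆ Set.Ioi 0 := by
  obtain ⟨hγ1, hγ2⟩ := hγ
  have hπ : (0:ℝ) < π := Real.pi_pos
  have hc : (0:ℝ) < 4 * π / 3 := by positivity
  set p : ℝ := 2 - 3 * γ with hp_def
  set q : ℝ := 2 - 3 * n * γ with hq_def
  have hp : p < 0 := by simp only [hp_def]; nlinarith
  have hq : q < 0 := by simp only [hq_def]; nlinarith
  have hpq : 0 < p - q := by simp only [hp_def, hq_def]; nlinarith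
  have hAn1 : (0:ℝ) < A ^ (n - 1) := Real.rpow_pos_of_pos hA _
  have hAn : (0:ℝ) < A ^ n := Real.rpow_pos_of_pos hA _
  have hAnsplit : A ^ n = A ^ (n - 1) * A := by
    have h := Real.rpow_add hA (n - 1) 1
    rw [Real.rpow_one] at h
    rw [show n - 1 + 1 = n by ring] at h
    exact h
  set K : ℝ := B * A ^ (n - 1) * (2 - 3 * n * γ) / (3 * γ - 2) with hK_def
  have hK : 0 < K := by
    apply div_pos
    · have : B * A ^ (n - 1) < 0 := mul_neg_of_neg_of_pos hB hAn1
      nlinarith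
    · nlinarith
  have he : 3 * (n - 1) * γ = p - q := by simp only [hp_def, hq_def]; ring
  have hastar_pos : 0 < astar := by
    rw [hastar]; exact Real.rpow_pos_of_pos hK _
  have hkey : astar ^ (p - q) = K := by
    have hγpos : 0 < 3 * (n - 1) * γ := by nlinarith
    have hγ0 : 3 * (n - 1) * γ ≠ 0 := ne_of_gt hγpos
    rw [hastar, ← Real.rpow_mul hK.le,
      show 1 / (3 * (n - 1) * γ) * (p - q) = 1 by rw [← he]; field_simp; exact div_self (sub_ne_zero.mpr (ne_of_gt hn)),
      Real.rpow_one]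
  -- the explicit function and its derivative
  set g : ℝ → ℝ := fun a => -(4 * π / 3) * (A * a ^ p + B * A ^ n * a ^ q) with hg_def
  have hVg : ∀ a : ℝ, 0 < a → V a = g a := fun a ha => hV a ha
  set φ : ℝ → ℝ := fun a => p * a ^ (p - q) + B * A ^ (n - 1) * q with hφ_def
  have hg' : ∀ a : ℝ, 0 < a →
      HasDerivAt g (-(4 * π / 3) * A * a ^ (q - 1) * φ a) a := by
    intro a ha
    have h1 : HasDerivAt (fun x : ℝ => x ^ p) (p * a ^ (p - 1)) a :=
      Real.hasDerivAt_rpow_const (Or.inl (ne_of_gt ha))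
    have h2 : HasDerivAt (fun x : ℝ => x ^ q) (q * a ^ (q - 1)) a :=
      Real.hasDerivAt_rpow_const (Or.inl (ne_of_gt ha))
    have h3 : HasDerivAt g
        (-(4 * π / 3) * (A * (p * a ^ (p - 1)) + B * A ^ n * (q * a ^ (q - 1)))) a :=
      ((h1.const_mul A).add (h2.const_mul (B * A ^ n))).const_mul (-(4 * π / 3))
    convert h3 using 1
    have hsplit : a ^ (p - 1) = a ^ (q - 1) * a ^ (p - q) := by
      rw [← Real.rpow_add ha]; ring_nf
    rw [hφ_def, hsplit, hAnsplit]; ring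
  have hφstar : φ astar = 0 := by
    simp only [hφ_def]
    rw [hkey, hK_def]
    have h32 : (3:ℝ) * γ - 2 ≠ 0 := by intro h; nlinarith
    field_simp
    simp only [hp_def, hq_def]; ring
  have hφpos : ∀ a : ℝ, 0 < a → a < astar → 0 < φ a := by
    intro a ha haa
    have h1 : a ^ (p - q) < astar ^ (p - q) := Real.rpow_lt_rpow ha.le haa hpq
    rw [hkey] at h1
    have h2 : p * K < p * a ^ (p - q) := by
      exact mul_lt_mul_of_neg_left h1 hp
    have h3 : p * K + B * A ^ (n - 1) * q = 0 := by
      have := hφstar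
      simp only [hφ_def] at this
      rw [hkey] at this; linarith
    simp only [hφ_def]; linarith
  have hφneg : ∀ a : ℝ, astar < a → φ a < 0 := by
    intro a haa
    have h1 : astar ^ (p - q) < a ^ (p - q) :=
      Real.rpow_lt_rpow hastar_pos.le haa hpq
    rw [hkey] at h1
    have h2 : p * a ^ (p - q) < p * K := mul_lt_mul_of_neg_left h1 hp
    have h3 : p * K + B * A ^ (n - 1) * q = 0 := by
      have := hφstar
      simp only [hφ_def] at this
      rw [hkey] at this; linarith
    simp only [hφ_def]; linarith
  -- monotonicity of g
  have hganti : StrictAntiOn g (Set.Ioc 0 astar) := by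
    apply strictAntiOn_of_deriv_neg (convex_Ioc 0 astar)
    · intro x hx; exact (hg' x hx.1).continuousAt.continuousWithinAt
    · intro x hx
      rw [interior_Ioc] at hx
      rw [(hg' x hx.1).deriv]
      have h1 : -(4 * π / 3) * A * x ^ (q - 1) < 0 := by
        have h0 : (0:ℝ) < x ^ (q - 1) := Real.rpow_pos_of_pos hx.1 _
        have := mul_pos (mul_pos hc hA) h0
        linarith
      exact mul_neg_of_neg_of_pos h1 (hφpos x hx.1 hx.2)
  have hgmono : StrictMonoOn g (Set.Ici astar) := by
    apply strictMonoOn_of_deriv_pos (convex_Ici astar)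
    · intro x hx
      have hx0 : 0 < x := lt_of_lt_of_le hastar_pos hx
      exact (hg' x hx0).continuousAt.continuousWithinAt
    · intro x hx
      rw [interior_Ici] at hx
      have hx0 : 0 < x := lt_trans hastar_pos hx
      rw [(hg' x hx0).deriv]
      have h1 : -(4 * π / 3) * A * x ^ (q - 1) < 0 := by
        have h0 : (0:ℝ) < x ^ (q - 1) := Real.rpow_pos_of_pos hx0 _
        have := mul_pos (mul_pos hc hA) h0
        linarith
      exact mul_pos_of_neg_of_neg h1 (hφneg x hx)
  have hVanti : StrictAntiOn V (Set.Ioc 0 astar) := by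
    intro x hx y hy hxy
    rw [hVg x hx.1, hVg y hy.1]
    exact hganti hx hy hxy
  have hVmono : StrictMonoOn V (Set.Ici astar) := by
    intro x hx y hy hxy
    rw [hVg x (lt_of_lt_of_le hastar_pos hx), hVg y (lt_of_lt_of_le hastar_pos hy)]
    exact hgmono hx hy hxy
  -- limit at 0+
  have hlim0 : Tendsto V (nhdsWithin 0 (Set.Ioi 0)) atTop := by
    have h1 : Tendsto (fun a : ℝ => a ^ q) (nhdsWithin 0 (Set.Ioi 0)) atTop := by
      have h2 := (tendsto_rpow_atTop (show (0:ℝ) < -q by linarith)).comp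
        tendsto_inv_nhdsGT_zero
      refine h2.congr' ?_
      filter_upwards [self_mem_nhdsWithin] with a (ha : 0 < a)
      show a⁻¹ ^ (-q) = a ^ q
      rw [Real.inv_rpow ha.le, ← Real.rpow_neg ha.le, neg_neg]
    have h2 : Tendsto (fun a : ℝ => -(4 * π / 3) * (A * a ^ (p - q) + B * A ^ n))
        (nhdsWithin 0 (Set.Ioi 0)) (𝓝 (-(4 * π / 3) * (A * 0 + B * A ^ n))) := by
      apply Tendsto.const_mul
      apply Tendsto.add_const
      apply Tendsto.const_mul
      have hcont : Tendsto (fun a : ℝ => a ^ (p - q)) (𝓝 0) (𝓝 ((0:ℝ) ^ (p - q))) :=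
        (Real.continuousAt_rpow_const 0 (p - q) (Or.inr hpq.le)).tendsto
      rw [Real.zero_rpow (ne_of_gt hpq)] at hcont
      exact hcont.mono_left nhdsWithin_le_nhds
    have hL : 0 < -(4 * π / 3) * (A * 0 + B * A ^ n) := by
      have hBA : B * A ^ n < 0 := mul_neg_of_neg_of_pos hB hAn
      nlinarith [mul_pos hc (neg_pos.mpr hBA)]
    have h3 := (h1.atTop_mul_pos hL h2)
    refine h3.congr' ?_
    filter_upwards [self_mem_nhdsWithin] with a (ha : 0 < a)
    have hsplit : a ^ p = a ^ q * a ^ (p - q) := by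
      rw [← Real.rpow_add ha]; ring_nf
    show a ^ q * (-(4 * π / 3) * (A * a ^ (p - q) + B * A ^ n)) = V a
    rw [hVg a ha]
    show _ = -(4 * π / 3) * (A * a ^ p + B * A ^ n * a ^ q)
    rw [hsplit]; ring
  -- limit at ∞
  have hlimtop : Tendsto V atTop (nhdsWithin 0 (Set.Iio 0)) := by
    rw [tendsto_nhdsWithin_iff]
    constructor
    · have h1 : Tendsto (fun a : ℝ => a ^ p) atTop (𝓝 0) := by
        have := tendsto_rpow_neg_atTop (show (0:ℝ) < -p by linarith)
        simpa using this
      have h2 : Tendsto (fun a : ℝ => a ^ q) atTop (𝓝 0) := by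
        have := tendsto_rpow_neg_atTop (show (0:ℝ) < -q by linarith)
        simpa using this
      have h3 : Tendsto g atTop (𝓝 (-(4 * π / 3) * (A * 0 + B * A ^ n * 0))) :=
        (((h1.const_mul A).add (h2.const_mul (B * A ^ n))).const_mul (-(4 * π / 3)))
      have h4 : -(4 * π / 3) * (A * 0 + B * A ^ n * 0) = 0 := by ring
      rw [h4] at h3
      refine h3.congr' ?_
      filter_upwards [eventually_gt_atTop 0] with a ha
      exact (hVg a ha).symm
    · have h1 : ∀ᶠ a : ℝ in atTop, -B * A ^ (n - 1) < a ^ (p - q) :=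
        (tendsto_rpow_atTop hpq).eventually_gt_atTop _
      filter_upwards [h1, eventually_gt_atTop 0] with a ha1 ha0
      rw [hVg a ha0, hg_def]
      show -(4 * π / 3) * (A * a ^ p + B * A ^ n * a ^ q) < 0
      have hsplit : a ^ p = a ^ q * a ^ (p - q) := by
        rw [← Real.rpow_add ha0]; ring_nf
      have hq0 : (0:ℝ) < a ^ q := Real.rpow_pos_of_pos ha0 _
      have hin : 0 < A * a ^ (p - q) + B * A ^ n := by
        rw [hAnsplit]
        nlinarith [mul_lt_mul_of_pos_left ha1 hA]
      rw [hsplit]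
      have : A * (a ^ q * a ^ (p - q)) + B * A ^ n * a ^ q
          = a ^ q * (A * a ^ (p - q) + B * A ^ n) := by ring
      rw [this]
      have hprod := mul_pos hc (mul_pos hq0 hin)
      linarith
  refine ⟨hlim0, hlimtop, hVanti, hVmono, ?_⟩
  intro E hE1 hE2
  -- near 0, V > E
  have hε : ∃ ε > 0, ∀ a : ℝ, 0 < a → a < ε → E < V a := by
    have h1 : ∀ᶠ a in nhdsWithin (0:ℝ) (Set.Ioi 0), E < V a :=
      hlim0.eventually_gt_atTop E
    rw [eventually_iff, Metric.mem_nhdsWithin_iff] at h1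
    obtain ⟨ε, hε0, hεsub⟩ := h1
    refine ⟨ε, hε0, fun a ha0 haε => ?_⟩
    exact hεsub ⟨by simpa [abs_of_pos ha0] using haε, ha0⟩
  obtain ⟨ε, hε0, hεV⟩ := hε
  -- for large a, V > E
  have hM : ∃ M : ℝ, ∀ a : ℝ, M ≤ a → E < V a := by
    have h1 : ∀ᶠ a : ℝ in atTop, E < V a := by
      have := hlimtop.mono_right nhdsWithin_le_nhds
      exact this.eventually (eventually_gt_nhds hE2)
    exact eventually_atTop.mp h1
  obtain ⟨M, hMV⟩ := hM
  set S : Set ℝ := {a : ℝ | 0 < a ∧ V a < E} with hS_def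
  have hsub : S ⊆ Set.Icc ε M := by
    intro a ⟨ha0, haV⟩
    constructor
    · by_contra h
      exact absurd (hεV a ha0 (lt_of_not_ge h)) (not_lt.mpr haV.le)
    · by_contra h
      exact absurd (hMV a (le_of_lt (lt_of_not_ge h))) (not_lt.mpr haV.le)
  have hclsub : closure S ⊆ Set.Icc ε M := closure_minimal hsub isClosed_Icc
  refine ⟨(Metric.isBounded_Icc ε M).subset hsub, ?_, ?_, ?_⟩
  · constructor
    intro x hx y hy z hz
    refine ⟨lt_of_lt_of_le hx.1 hz.1, ?_⟩
    rcases le_total z astar with hza | hza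
    · rcases eq_or_lt_of_le hz.1 with h | h
      · rw [← h]; exact hx.2
      · have hxm : x ∈ Set.Ioc 0 astar := ⟨hx.1, le_trans hz.1 hza⟩
        have hzm : z ∈ Set.Ioc 0 astar := ⟨lt_of_lt_of_le hx.1 hz.1, hza⟩
        exact lt_trans (hVanti hxm hzm h) hx.2
    · rcases eq_or_lt_of_le hz.2 with h | h
      · rw [h]; exact hy.2
      · have hzm : z ∈ Set.Ici astar := hza
        have hym : y ∈ Set.Ici astar := le_trans hza hz.2
        exact lt_trans (hVmono hzm hym h) hy.2
  · exact isCompact_Icc.of_isClosed_subset isClosed_closure hclsub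
  · intro a ha
    exact lt_of_lt_of_le hε0 (hclsub ha).1
end

section
/- Let C > 0, p ≥ 1/2, and let a: (t₀, t₁) → (0,∞) be C¹ with a(t) → 0 as t → t₀⁺ and a'(t) = C a(t)^{-p} (1 + o(1)) as t → t₀⁺. Then a(t) = (C(p+1))^{1/(p+1)} (t-t₀)^{1/(p+1)} (1 + o(1)) as t → t₀⁺. -/
open Real Set Filter

/-- if a → 0 as t → t₀⁺ and a' = C a^{-p}(1+o(1)) with C > 0,
p ≥ 1/2, then a(t) = (C(p+1))^{1/(p+1)} (t-t₀)^{1/(p+1)} (1+o(1)) as t → t₀⁺. -/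
theorem stmt11 (C p t₀ t₁ : ℝ) (hC : 0 < C) (hp : 1 / 2 ≤ p) (ht : t₀ < t₁)
    (a a' ε : ℝ → ℝ)
    (ha : ∀ t ∈ Set.Ioo t₀ t₁, HasDerivAt a (a' t) t)
    (hapos : ∀ t ∈ Set.Ioo t₀ t₁, 0 < a t)
    (hlim : Tendsto a (nhdsWithin t₀ (Set.Ioi t₀)) (nhds 0))
    (heq : ∀ t ∈ Set.Ioo t₀ t₁, a' t = C * a t ^ (-p) * (1 + ε t))
    (hε : Tendsto ε (nhdsWithin t₀ (Set.Ioi t₀)) (nhds 0)) :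
    ∃ δ : ℝ → ℝ, Tendsto δ (nhdsWithin t₀ (Set.Ioi t₀)) (nhds 0) ∧
      ∀ t ∈ Set.Ioo t₀ t₁,
        a t = (C * (p + 1)) ^ (1 / (p + 1)) * (t - t₀) ^ (1 / (p + 1)) * (1 + δ t) := by
  have hp1 : (0:ℝ) < p + 1 := by linarith
  set K : ℝ := C * (p + 1) with hKdef
  have hK : 0 < K := mul_pos hC hp1
  set b : ℝ → ℝ := fun t => a t ^ (p + 1) with hbdef
  -- derivative of b
  have hb' : ∀ t ∈ Set.Ioo t₀ t₁, HasDerivAt b (K * (1 + ε t)) t := by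
    intro t htm
    have h := (ha t htm).rpow_const (p := p + 1) (Or.inl (hapos t htm).ne')
    convert h using 1
    rw [heq t htm]
    have hpow : a t ^ (-p) * a t ^ (p + 1 - 1) = 1 := by
      rw [show p + 1 - 1 = p by ring, ← Real.rpow_add (hapos t htm)]
      simp
    rw [show C * a t ^ (-p) * (1 + ε t) * (p + 1) * a t ^ (p + 1 - 1)
        = C * (p + 1) * (1 + ε t) * (a t ^ (-p) * a t ^ (p + 1 - 1)) from by ring, hpow]
    ring
  -- b tends to 0
  have hb0 : Tendsto b (nhdsWithin t₀ (Set.Ioi t₀)) (nhds 0) := by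
    have := hlim.rpow_const (p := p + 1) (Or.inr hp1.le)
    rwa [Real.zero_rpow hp1.ne'] at this
  -- the main limit
  have hmain : Tendsto (fun t => b t / (K * (t - t₀))) (nhdsWithin t₀ (Set.Ioi t₀)) (nhds 1) := by
    rw [Metric.tendsto_nhds]
    intro η hη
    have hη2 : 0 < η / 2 := by positivity
    have hev : ∀ᶠ t in nhdsWithin t₀ (Set.Ioi t₀), |ε t| < η / 2 ∧ t ∈ Set.Ioo t₀ t₁ := by
      filter_upwards [hε (Metric.ball_mem_nhds 0 hη2),
        Ioo_mem_nhdsGT_of_mem (Set.mem_Ico.2 ⟨le_refl t₀, ht⟩)] with t h1 h2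
      refine ⟨?_, h2⟩
      simpa [Real.dist_eq] using h1
    obtain ⟨u, hu, hsub⟩ := mem_nhdsGT_iff_exists_Ioo_subset.1 hev
    have key : ∀ t ∈ Set.Ioo t₀ u, |b t - K * (t - t₀)| ≤ K * (η / 2) * (t - t₀) := by
      intro t htm
      have htt₀ : t₀ < t := htm.1
      have hst : ∀ s ∈ Set.Ioo t₀ t, |b t - b s - K * (t - s)| ≤ K * (η / 2) * (t - s) := by
        intro s hsm
        have hsub2 : Set.Icc s t ⊆ Set.Ioo t₀ u := fun x hx =>
          ⟨lt_of_lt_of_le hsm.1 hx.1, lt_of_le_of_lt hx.2 htm.2⟩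
        have hder : ∀ x ∈ Set.Icc s t,
            HasDerivWithinAt (fun y => b y - K * y) (K * ε x) (Set.Icc s t) x := by
          intro x hx
          have hx' := hsub (hsub2 hx)
          have h1 := (hb' x hx'.2).sub (((hasDerivAt_id x).const_mul K))
          have : K * (1 + ε x) - K * 1 = K * ε x := by ring
          rw [this] at h1
          exact h1.hasDerivWithinAt
        have hbound : ∀ x ∈ Set.Ico s t, ‖K * ε x‖ ≤ K * (η / 2) := by
          intro x hx
          have hx' := hsub (hsub2 (Set.Ico_subset_Icc_self hx))
          rw [Real.norm_eq_abs, abs_mul, abs_of_pos hK]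
          exact mul_le_mul_of_nonneg_left hx'.1.le hK.le
        have := norm_image_sub_le_of_norm_deriv_le_segment' hder hbound t
          (Set.right_mem_Icc.2 hsm.2.le)
        rw [Real.norm_eq_abs] at this
        calc |b t - b s - K * (t - s)| = |b t - K * t - (b s - K * s)| := by ring_nf
          _ ≤ K * (η / 2) * (t - s) := this
      -- let s → t₀⁺
      have hne : (nhdsWithin t₀ (Set.Ioi t₀)).NeBot := nhdsGT_neBot t₀
      have hid : Tendsto (fun s : ℝ => s) (nhdsWithin t₀ (Set.Ioi t₀)) (nhds t₀) :=
        tendsto_id.mono_left nhdsWithin_le_nhds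
      have h1 : Tendsto (fun s => |b t - b s - K * (t - s)|)
          (nhdsWithin t₀ (Set.Ioi t₀)) (nhds |b t - K * (t - t₀)|) := by
        have : Tendsto (fun s => b t - b s - K * (t - s))
            (nhdsWithin t₀ (Set.Ioi t₀)) (nhds (b t - 0 - K * (t - t₀))) :=
          (tendsto_const_nhds.sub hb0).sub (tendsto_const_nhds.sub hid |>.const_mul K)
        simpa using this.abs
      have h2 : Tendsto (fun s => K * (η / 2) * (t - s))
          (nhdsWithin t₀ (Set.Ioi t₀)) (nhds (K * (η / 2) * (t - t₀))) :=
        (tendsto_const_nhds.sub hid).const_mul _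
      refine le_of_tendsto_of_tendsto h1 h2 ?_
      filter_upwards [Ioo_mem_nhdsGT_of_mem (Set.mem_Ico.2 ⟨le_refl t₀, htt₀⟩)] with s hs
      exact hst s hs
    filter_upwards [Ioo_mem_nhdsGT_of_mem (Set.mem_Ico.2 ⟨le_refl t₀, hu⟩)] with t htm
    have htt₀ : 0 < t - t₀ := sub_pos.2 htm.1
    have hKt : 0 < K * (t - t₀) := mul_pos hK htt₀
    have heq1 : b t / (K * (t - t₀)) - 1 = (b t - K * (t - t₀)) / (K * (t - t₀)) := by
      field_simp
    rw [Real.dist_eq, heq1, abs_div, abs_of_pos hKt]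
    calc |b t - K * (t - t₀)| / (K * (t - t₀)) ≤ K * (η / 2) * (t - t₀) / (K * (t - t₀)) :=
          (div_le_div_iff_of_pos_right hKt).2 (key t htm)
      _ = η / 2 := by field_simp
      _ < η := by linarith
  -- define δ
  refine ⟨fun t => (b t / (K * (t - t₀))) ^ (1 / (p + 1)) - 1, ?_, ?_⟩
  · have := hmain.rpow_const (p := 1 / (p + 1)) (Or.inl one_ne_zero)
    rw [Real.one_rpow] at this
    simpa using this.sub_const 1
  · intro t htm
    have htt₀ : 0 < t - t₀ := sub_pos.2 htm.1
    have hKt : 0 < K * (t - t₀) := mul_pos hK htt₀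
    have hat : 0 < a t := hapos t htm
    have hbt : (0:ℝ) ≤ b t := Real.rpow_nonneg hat.le _
    have h1 : (1 : ℝ) + ((b t / (K * (t - t₀))) ^ (1 / (p + 1)) - 1)
        = b t ^ (1 / (p + 1)) / (K * (t - t₀)) ^ (1 / (p + 1)) := by
      rw [Real.div_rpow hbt hKt.le]; ring
    have h2 : b t ^ (1 / (p + 1)) = a t := by
      show (a t ^ (p + 1)) ^ (1 / (p + 1)) = a t
      rw [← Real.rpow_mul hat.le, mul_one_div_cancel hp1.ne', Real.rpow_one]
    have h3 : (K * (t - t₀)) ^ (1 / (p + 1)) = K ^ (1 / (p + 1)) * (t - t₀) ^ (1 / (p + 1)) :=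
      Real.mul_rpow hK.le htt₀.le
    rw [h1, h2, h3, hKdef]
    have hne : (0:ℝ) < (C * (p + 1)) ^ (1 / (p + 1)) * (t - t₀) ^ (1 / (p + 1)) :=
      mul_pos (Real.rpow_pos_of_pos (mul_pos hC hp1) _) (Real.rpow_pos_of_pos htt₀ _)
    field_simp
end
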